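/- For every integer n ≥ 3, the minimum defect over all Mondrian partitions of the n×n square into exactly 3 rectangles is given by: d_3(n) = n + n/3 if n ≡ 0 (mod 6); d_3(n) = n − (n−1)/6 if n ≡ 1 (mod 6); d_3(n) = n + (n−2)/3 if n ≡ 2 (mod 6); d_3(n) = n − n/3 if n ≡ 3 (mod 6); d_3(n) = n + (n+2)/3 if n ≡ 4 (mod 6); d_3(n) = n − (n+1)/6 if n ≡ 5 (mod 6). -/
import Mathlib


/-- An axis-aligned rectangle with integer coordinates placed on the grid:
lower-left corner `(x, y)`, width `w`, and height `h`. -/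
structure Rect where
  x : ℕ
  y : ℕ
  w : ℕ
  h : ℕ
deriving DecidableEq

/-- The area of a rectangle. -/
def Rect.area (r : Rect) : ℕ := r.w * r.h

/-- Two rectangles are congruent if they have the same dimensions,
possibly after a ninety-degree rotation. -/
def Rect.Congruent (r s : Rect) : Prop :=
  (r.w = s.w ∧ r.h = s.h) ∨ (r.w = s.h ∧ r.h = s.w)

/-- The rectangle `r` covers the unit grid cell `[i, i+1) × [j, j+1)`. -/
def Rect.Covers (r : Rect) (i j : ℕ) : Prop :=
  r.x ≤ i ∧ i < r.x + r.w ∧ r.y ≤ j ∧ j < r.y + r.h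

/-- A Mondrian partition of the `n × n` square: a finite collection of
pairwise non-congruent rectangles with positive integer side lengths that
tile the square (every cell of the square is covered by exactly one
rectangle, and rectangles lie inside the square). -/
structure Mondrian (n : ℕ) where
  rects : Finset Rect
  pos : ∀ r ∈ rects, 0 < r.w ∧ 0 < r.h
  inside : ∀ r ∈ rects, r.x + r.w ≤ n ∧ r.y + r.h ≤ n
  cover : ∀ i j : ℕ, i < n → j < n → ∃! r : Rect, r ∈ rects ∧ r.Covers i j
  noncong : ∀ r ∈ rects, ∀ s ∈ rects, r ≠ s → ¬ r.Congruent s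

/-- The defect of a Mondrian partition: the difference between the largest
and the smallest rectangle areas. -/
def Mondrian.defect {n : ℕ} (P : Mondrian n) : ℕ :=
  P.rects.sup fun r => P.rects.sup fun s => r.area - s.area

/-- A Mondrian partition is perfect if all its rectangles have the same area. -/
def Mondrian.IsPerfect {n : ℕ} (P : Mondrian n) : Prop :=
  ∀ r ∈ P.rects, ∀ s ∈ P.rects, r.area = s.area

/-- `mondrianDk n k` is the minimum defect over all Mondrian partitions of the
`n × n` square using exactly `k` rectangles. -/
noncomputable def mondrianDk (n k : ℕ) : ℕ :=
  sInf {d | ∃ P : Mondrian n, P.rects.card = k ∧ P.defect = d}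

/-- `mondrianD n` is the minimum defect over all Mondrian partitions of the
`n × n` square (into at least two rectangles). -/
noncomputable def mondrianD (n : ℕ) : ℕ :=
  sInf {d | ∃ P : Mondrian n, 2 ≤ P.rects.card ∧ P.defect = d}

namespace MondrianAux

open Finset

lemma cover_unique {n : ℕ} (P : Mondrian n) {i j : ℕ} {r s : Rect}
    (hr : r ∈ P.rects) (hs : s ∈ P.rects)
    (hcr : r.Covers i j) (hcs : s.Covers i j) : r = s := by
  have hi : i < n := lt_of_lt_of_le hcr.2.1 (P.inside r hr).1
  have hj : j < n := lt_of_lt_of_le hcr.2.2.2 (P.inside r hr).2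
  obtain ⟨u, -, hu⟩ := P.cover i j hi hj
  exact (hu r ⟨hr, hcr⟩).trans (hu s ⟨hs, hcs⟩).symm

lemma defect_ge {n : ℕ} (P : Mondrian n) {r s : Rect}
    (hr : r ∈ P.rects) (hs : s ∈ P.rects) : r.area - s.area ≤ P.defect := by
  unfold Mondrian.defect
  refine le_trans ?_ (Finset.le_sup (f := fun r => P.rects.sup fun s => r.area - s.area) hr)
  exact Finset.le_sup (f := fun s => r.area - s.area) hs

def tr (r : Rect) : Rect := ⟨r.y, r.x, r.h, r.w⟩

lemma tr_inj : Function.Injective tr := by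
  intro a b h
  cases a; cases b
  simp only [tr, Rect.mk.injEq] at h ⊢
  tauto

lemma tr_covers {r : Rect} {i j : ℕ} : (tr r).Covers i j ↔ r.Covers j i := by
  simp only [tr, Rect.Covers]; tauto

lemma tr_area (r : Rect) : (tr r).area = r.area := Nat.mul_comm _ _

def Mondrian.transpose {n : ℕ} (P : Mondrian n) : Mondrian n where
  rects := P.rects.image tr
  pos := by
    intro r hr
    obtain ⟨s, hs, rfl⟩ := Finset.mem_image.mp hr
    have := P.pos s hs; exact ⟨this.2, this.1⟩
  inside := by
    intro r hr
    obtain ⟨s, hs, rfl⟩ := Finset.mem_image.mp hr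
    have := P.inside s hs; exact ⟨this.2, this.1⟩
  cover := by
    intro i j hi hj
    obtain ⟨r, ⟨hr, hc⟩, hu⟩ := P.cover j i hj hi
    refine ⟨tr r, ⟨Finset.mem_image_of_mem _ hr, tr_covers.mpr hc⟩, ?_⟩
    rintro s ⟨hs, hcs⟩
    obtain ⟨s₀, hs₀, rfl⟩ := Finset.mem_image.mp hs
    rw [hu s₀ ⟨hs₀, tr_covers.mp hcs⟩]
  noncong := by
    intro r hr s hs hne hcong
    obtain ⟨r₀, hr₀, rfl⟩ := Finset.mem_image.mp hr
    obtain ⟨s₀, hs₀, rfl⟩ := Finset.mem_image.mp hs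
    refine P.noncong r₀ hr₀ s₀ hs₀ (fun h => hne (by rw [h])) ?_
    simp only [Rect.Congruent, tr] at hcong ⊢
    tauto

lemma transpose_card {n : ℕ} (P : Mondrian n) :
    (Mondrian.transpose P).rects.card = P.rects.card :=
  Finset.card_image_of_injective _ tr_inj

lemma transpose_defect {n : ℕ} (P : Mondrian n) :
    (Mondrian.transpose P).defect = P.defect := by
  unfold Mondrian.defect
  show (P.rects.image tr).sup (fun r => (P.rects.image tr).sup fun s => r.area - s.area) = _
  rw [Finset.sup_image]
  refine Finset.sup_congr rfl (fun r hr => ?_)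
  show (P.rects.image tr).sup (fun s => (tr r).area - s.area) = _
  rw [Finset.sup_image]
  refine Finset.sup_congr rfl (fun s hs => ?_)
  simp [Function.comp, tr_area]

def vf (n : ℕ) (r : Rect) : Rect := ⟨r.x, n - r.y - r.h, r.w, r.h⟩

lemma vf_covers {n : ℕ} {r : Rect} {i j : ℕ} (hin : r.y + r.h ≤ n) (hj : j < n) :
    (vf n r).Covers i j ↔ r.Covers i (n - 1 - j) := by
  simp only [vf, Rect.Covers]; omega

def Mondrian.vflip {n : ℕ} (P : Mondrian n) : Mondrian n where
  rects := P.rects.image (vf n)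
  pos := by
    intro r hr
    obtain ⟨s, hs, rfl⟩ := Finset.mem_image.mp hr
    exact P.pos s hs
  inside := by
    intro r hr
    obtain ⟨s, hs, rfl⟩ := Finset.mem_image.mp hr
    have h1 := P.inside s hs
    have := P.pos s hs
    simp only [vf]
    omega
  cover := by
    intro i j hi hj
    obtain ⟨r, ⟨hr, hc⟩, hu⟩ := P.cover i (n - 1 - j) hi (by omega)
    refine ⟨vf n r, ⟨Finset.mem_image_of_mem _ hr,
      (vf_covers (P.inside r hr).2 hj).mpr (by convert hc using 2)⟩, ?_⟩
    rintro s ⟨hs, hcs⟩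
    obtain ⟨s₀, hs₀, rfl⟩ := Finset.mem_image.mp hs
    rw [hu s₀ ⟨hs₀, (vf_covers (P.inside s₀ hs₀).2 hj).mp hcs⟩]
  noncong := by
    intro r hr s hs hne hcong
    obtain ⟨r₀, hr₀, rfl⟩ := Finset.mem_image.mp hr
    obtain ⟨s₀, hs₀, rfl⟩ := Finset.mem_image.mp hs
    refine P.noncong r₀ hr₀ s₀ hs₀ (fun h => hne (by rw [h])) ?_
    simp only [Rect.Congruent, vf] at hcong ⊢
    tauto

lemma vf_injOn {n : ℕ} (P : Mondrian n) :
    Set.InjOn (vf n) P.rects := by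
  intro a ha b hb h
  have hia := P.inside a ha
  have hib := P.inside b hb
  cases a; cases b
  simp only [vf, Rect.mk.injEq] at h hia hib ⊢
  omega

lemma vflip_card {n : ℕ} (P : Mondrian n) :
    (Mondrian.vflip P).rects.card = P.rects.card :=
  Finset.card_image_of_injOn (vf_injOn P)

lemma vflip_defect {n : ℕ} (P : Mondrian n) :
    (Mondrian.vflip P).defect = P.defect := by
  unfold Mondrian.defect
  show (P.rects.image (vf n)).sup (fun r => (P.rects.image (vf n)).sup fun s => r.area - s.area) = _
  rw [Finset.sup_image]
  refine Finset.sup_congr rfl (fun r hr => ?_)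
  show (P.rects.image (vf n)).sup (fun s => (vf n r).area - s.area) = _
  rw [Finset.sup_image]
  refine Finset.sup_congr rfl (fun s hs => ?_)
  simp [Function.comp, vf, Rect.area]

end MondrianAux
namespace MondrianAux

/-- target defect value -/
def tgt (n : ℕ) : ℕ :=
  if n % 6 = 0 then n + n / 3
  else if n % 6 = 1 then n - (n - 1) / 6
  else if n % 6 = 2 then n + (n - 2) / 3
  else if n % 6 = 3 then n - n / 3
  else if n % 6 = 4 then n + (n + 2) / 3
  else n - (n + 1) / 6

lemma tgt_le_two_n {n : ℕ} (hn : 3 ≤ n) : tgt n ≤ 2 * n := by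
  unfold tgt; split_ifs <;> omega

lemma keylem (n b c D : ℤ) (hb : 1 ≤ b) (hm : 2 * b < n) (hc : 1 ≤ c)
    (h1 : n * (n - c) - b * c ≤ D) (h3 : (n - 2 * b) * c ≤ D) :
    2 * (n - 2 * b) * n ^ 2 ≤ (4 * n - 2 * b) * D := by
  have e1 : n ^ 2 - D ≤ (n + b) * c := by nlinarith
  have e2 : 2 * (n - 2 * b) * (n ^ 2 - D) ≤ 2 * (n - 2 * b) * ((n + b) * c) := by
    apply mul_le_mul_of_nonneg_left e1; linarith
  have e3 : (2 * n + 2 * b) * ((n - 2 * b) * c) ≤ (2 * n + 2 * b) * D := by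
    apply mul_le_mul_of_nonneg_left h3; linarith
  nlinarith [e2, e3]

lemma arith0 (t b c D : ℤ) (ht : 1 ≤ t) (hb : 1 ≤ b) (hm : 2 * b < 6 * t)
    (hc1 : 1 ≤ c) (hcn : c ≤ 6 * t - 1)
    (h1 : (6 * t) * ((6 * t) - c) - b * c ≤ D)
    (h2 : ((6 * t) - b) * c - (6 * t) * ((6 * t) - c) ≤ D)
    (h3 : ((6 * t) - 2 * b) * c ≤ D) : 8 * t ≤ D := by
  by_contra hD
  push_neg at hD
  have hmc : 6 * t - 2 * b = 2 ∨ 4 ≤ 6 * t - 2 * b := by omega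
  rcases hmc with hm2 | hm4
  · have hbval : b = 3 * t - 1 := by omega
    subst hbval
    have hcle : c ≤ 4 * t - 1 := by nlinarith
    have hp : 0 ≤ (9 * t - 1) * ((4 * t - 1) - c) := by
      apply mul_nonneg <;> linarith
    nlinarith [h1, hp]
  · have key := keylem (6 * t) b c D hb hm hc1 h1 h3
    have hq : 0 ≤ (4 * (6 * t) - 2 * b) * ((8 * t - 1) - D) := by
      apply mul_nonneg <;> linarith
    have hp : 0 ≤ ((6 * t - 2 * b) - 4) * (2 * (6 * t) ^ 2 - (8 * t - 1)) := by
      apply mul_nonneg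
      · linarith
      · nlinarith
    nlinarith [key, hq, hp]

lemma arith1 (t b c D : ℤ) (ht : 1 ≤ t) (hb : 1 ≤ b) (hm : 2 * b < 6 * t + 1)
    (hc1 : 1 ≤ c) (hcn : c ≤ 6 * t)
    (h1 : (6 * t + 1) * ((6 * t + 1) - c) - b * c ≤ D)
    (h2 : ((6 * t + 1) - b) * c - (6 * t + 1) * ((6 * t + 1) - c) ≤ D)
    (h3 : ((6 * t + 1) - 2 * b) * c ≤ D) : 5 * t + 1 ≤ D := by
  by_contra hD
  push_neg at hD
  have hmc : 6 * t + 1 - 2 * b = 1 ∨ 3 ≤ 6 * t + 1 - 2 * b := by omega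
  rcases hmc with hm1 | hm3
  · have hbval : b = 3 * t := by omega
    subst hbval
    rcases le_or_gt c (4 * t) with hc | hc
    · have hp : 0 ≤ (9 * t + 1) * (4 * t - c) := by apply mul_nonneg <;> linarith
      nlinarith [h1, hp]
    · have hp : 0 ≤ (9 * t + 2) * (c - (4 * t + 1)) := by apply mul_nonneg <;> linarith
      nlinarith [h2, hp]
  · have key := keylem (6 * t + 1) b c D hb hm hc1 h1 h3
    have hq : 0 ≤ (4 * (6 * t + 1) - 2 * b) * ((5 * t) - D) := by
      apply mul_nonneg <;> linarith
    have hp : 0 ≤ ((6 * t + 1 - 2 * b) - 3) * (2 * (6 * t + 1) ^ 2 - (5 * t)) := by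
      apply mul_nonneg
      · linarith
      · nlinarith
    nlinarith [key, hq, hp]

lemma arith2 (t b c D : ℤ) (ht : 1 ≤ t) (hb : 1 ≤ b) (hm : 2 * b < 6 * t + 2)
    (hc1 : 1 ≤ c) (hcn : c ≤ 6 * t + 1)
    (h1 : (6 * t + 2) * ((6 * t + 2) - c) - b * c ≤ D)
    (h2 : ((6 * t + 2) - b) * c - (6 * t + 2) * ((6 * t + 2) - c) ≤ D)
    (h3 : ((6 * t + 2) - 2 * b) * c ≤ D) : 8 * t + 2 ≤ D := by
  by_contra hD
  push_neg at hD
  have hmc : 6 * t + 2 - 2 * b = 2 ∨ 4 ≤ 6 * t + 2 - 2 * b := by omega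
  rcases hmc with hm2 | hm4
  · have hbval : b = 3 * t := by omega
    subst hbval
    have hcle : c ≤ 4 * t := by nlinarith
    have hp : 0 ≤ (9 * t + 2) * ((4 * t) - c) := by apply mul_nonneg <;> linarith
    nlinarith [h1, hp]
  · have key := keylem (6 * t + 2) b c D hb hm hc1 h1 h3
    have hq : 0 ≤ (4 * (6 * t + 2) - 2 * b) * ((8 * t + 1) - D) := by
      apply mul_nonneg <;> linarith
    have hp : 0 ≤ ((6 * t + 2 - 2 * b) - 4) * (2 * (6 * t + 2) ^ 2 - (8 * t + 1)) := by
      apply mul_nonneg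
      · linarith
      · nlinarith
    nlinarith [key, hq, hp]

lemma arith3 (t b c D : ℤ) (ht : 0 ≤ t) (hb : 1 ≤ b) (hm : 2 * b < 6 * t + 3)
    (hc1 : 1 ≤ c) (hcn : c ≤ 6 * t + 2)
    (h1 : (6 * t + 3) * ((6 * t + 3) - c) - b * c ≤ D)
    (h2 : ((6 * t + 3) - b) * c - (6 * t + 3) * ((6 * t + 3) - c) ≤ D)
    (h3 : ((6 * t + 3) - 2 * b) * c ≤ D) : 4 * t + 2 ≤ D := by
  by_contra hD
  push_neg at hD
  have hmc : 6 * t + 3 - 2 * b = 1 ∨ 3 ≤ 6 * t + 3 - 2 * b := by omega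
  rcases hmc with hm1 | hm3
  · have hbval : b = 3 * t + 1 := by omega
    subst hbval
    have hcle : c ≤ 4 * t + 1 := by nlinarith
    have hp : 0 ≤ (9 * t + 4) * ((4 * t + 1) - c) := by apply mul_nonneg <;> linarith
    nlinarith [h1, hp]
  · have key := keylem (6 * t + 3) b c D hb hm hc1 h1 h3
    have hq : 0 ≤ (4 * (6 * t + 3) - 2 * b) * ((4 * t + 1) - D) := by
      apply mul_nonneg <;> linarith
    have hp : 0 ≤ ((6 * t + 3 - 2 * b) - 3) * (2 * (6 * t + 3) ^ 2 - (4 * t + 1)) := by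
      apply mul_nonneg
      · linarith
      · nlinarith
    nlinarith [key, hq, hp]

lemma arith4 (t b c D : ℤ) (ht : 0 ≤ t) (hb : 1 ≤ b) (hm : 2 * b < 6 * t + 4)
    (hc1 : 1 ≤ c) (hcn : c ≤ 6 * t + 3)
    (h1 : (6 * t + 4) * ((6 * t + 4) - c) - b * c ≤ D)
    (h2 : ((6 * t + 4) - b) * c - (6 * t + 4) * ((6 * t + 4) - c) ≤ D)
    (h3 : ((6 * t + 4) - 2 * b) * c ≤ D) : 8 * t + 6 ≤ D := by
  by_contra hD
  push_neg at hD
  have hmc : 6 * t + 4 - 2 * b = 2 ∨ 4 ≤ 6 * t + 4 - 2 * b := by omega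
  rcases hmc with hm2 | hm4
  · have hbval : b = 3 * t + 1 := by omega
    subst hbval
    have hcle : c ≤ 4 * t + 2 := by nlinarith
    have hp : 0 ≤ (9 * t + 5) * ((4 * t + 2) - c) := by apply mul_nonneg <;> linarith
    nlinarith [h1, hp]
  · have key := keylem (6 * t + 4) b c D hb hm hc1 h1 h3
    have hq : 0 ≤ (4 * (6 * t + 4) - 2 * b) * ((8 * t + 5) - D) := by
      apply mul_nonneg <;> linarith
    have hp : 0 ≤ ((6 * t + 4 - 2 * b) - 4) * (2 * (6 * t + 4) ^ 2 - (8 * t + 5)) := by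
      apply mul_nonneg
      · linarith
      · nlinarith
    nlinarith [key, hq, hp]

lemma arith5 (t b c D : ℤ) (ht : 0 ≤ t) (hb : 1 ≤ b) (hm : 2 * b < 6 * t + 5)
    (hc1 : 1 ≤ c) (hcn : c ≤ 6 * t + 4)
    (h1 : (6 * t + 5) * ((6 * t + 5) - c) - b * c ≤ D)
    (h2 : ((6 * t + 5) - b) * c - (6 * t + 5) * ((6 * t + 5) - c) ≤ D)
    (h3 : ((6 * t + 5) - 2 * b) * c ≤ D) : 5 * t + 4 ≤ D := by
  by_contra hD
  push_neg at hD
  have hmc : 6 * t + 5 - 2 * b = 1 ∨ 3 ≤ 6 * t + 5 - 2 * b := by omega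
  rcases hmc with hm1 | hm3
  · have hbval : b = 3 * t + 2 := by omega
    subst hbval
    rcases le_or_gt c (4 * t + 3) with hc | hc
    · have hp : 0 ≤ (9 * t + 7) * ((4 * t + 3) - c) := by apply mul_nonneg <;> linarith
      nlinarith [h1, hp]
    · have hp : 0 ≤ (9 * t + 8) * (c - (4 * t + 4)) := by apply mul_nonneg <;> linarith
      nlinarith [h2, hp]
  · have key := keylem (6 * t + 5) b c D hb hm hc1 h1 h3
    have hq : 0 ≤ (4 * (6 * t + 5) - 2 * b) * ((5 * t + 3) - D) := by
      apply mul_nonneg <;> linarith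
    have hp : 0 ≤ ((6 * t + 5 - 2 * b) - 3) * (2 * (6 * t + 5) ^ 2 - (5 * t + 3)) := by
      apply mul_nonneg
      · linarith
      · nlinarith
    nlinarith [key, hq, hp]

end MondrianAux
namespace MondrianAux

lemma nat_sub_le_int {x y D : ℕ} (h : x - y ≤ D) : (x : ℤ) - (y : ℤ) ≤ (D : ℤ) := by
  omega

lemma T_lower (n a b D : ℕ) (hn : 3 ≤ n) (ha1 : 1 ≤ a) (han : a < n)
    (hb1 : 1 ≤ b) (hbn : b < n) (hbne : 2 * b ≠ n)
    (d1 : n * a - b * (n - a) ≤ D) (d2 : b * (n - a) - n * a ≤ D)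
    (d3 : n * a - (n - b) * (n - a) ≤ D) (d4 : (n - b) * (n - a) - n * a ≤ D)
    (d5 : (n - b) * (n - a) - b * (n - a) ≤ D) (d6 : b * (n - a) - (n - b) * (n - a) ≤ D) :
    tgt n ≤ D := by
  -- pass to integers
  set c : ℕ := n - a with hc
  have hca : a = n - c := by omega
  have hc1 : 1 ≤ c := by omega
  have hcn : c ≤ n - 1 := by omega
  have hA : ((n * a : ℕ) : ℤ) = (n : ℤ) * ((n : ℤ) - (c : ℤ)) := by
    have : ((a : ℤ)) = (n : ℤ) - (c : ℤ) := by omega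
    rw [Nat.cast_mul, this]
  have hB : ((b * (n - a) : ℕ) : ℤ) = (b : ℤ) * (c : ℤ) := by
    have : ((n - a : ℕ) : ℤ) = (c : ℤ) := by omega
    rw [Nat.cast_mul, this]
  have hC : ((((n - b) * (n - a)) : ℕ) : ℤ) = ((n : ℤ) - (b : ℤ)) * (c : ℤ) := by
    have : ((n - b : ℕ) : ℤ) = (n : ℤ) - (b : ℤ) := by omega
    have h2 : ((n - a : ℕ) : ℤ) = (c : ℤ) := by omega
    rw [Nat.cast_mul, this, h2]
  have i1 := nat_sub_le_int d1
  have i2 := nat_sub_le_int d2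
  have i3 := nat_sub_le_int d3
  have i4 := nat_sub_le_int d4
  have i5 := nat_sub_le_int d5
  have i6 := nat_sub_le_int d6
  rw [hA, hB] at i1
  rw [hB, hA] at i2
  rw [hA, hC] at i3
  rw [hC, hA] at i4
  rw [hC, hB] at i5
  rw [hB, hC] at i6
  -- choose b or n - b
  have main : ∀ bz : ℤ, 1 ≤ bz → 2 * bz < n →
      ((n : ℤ) * ((n : ℤ) - (c : ℤ)) - bz * c ≤ D) →
      (((n : ℤ) - bz) * c - (n : ℤ) * ((n : ℤ) - (c : ℤ)) ≤ D) →
      (((n : ℤ) - 2 * bz) * c ≤ D) → tgt n ≤ D := by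
    intro bz hbz1 hbz2 h1 h2 h3
    have h6 : n % 6 = 0 ∨ n % 6 = 1 ∨ n % 6 = 2 ∨ n % 6 = 3 ∨ n % 6 = 4 ∨ n % 6 = 5 := by
      omega
    have htgt := tgt
    rcases h6 with h | h | h | h | h | h
    · have hnt : (n : ℤ) = 6 * ((n / 6 : ℕ) : ℤ) := by omega
      rw [hnt] at h1 h2 h3 hbz2
      have := arith0 ((n / 6 : ℕ) : ℤ) bz c D (by omega) hbz1 hbz2 (by omega) (by omega) h1 h2 h3
      unfold tgt; rw [if_pos h]; omega
    · have hnt : (n : ℤ) = 6 * ((n / 6 : ℕ) : ℤ) + 1 := by omega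
      rw [hnt] at h1 h2 h3 hbz2
      have := arith1 ((n / 6 : ℕ) : ℤ) bz c D (by omega) hbz1 hbz2 (by omega) (by omega) h1 h2 h3
      unfold tgt; rw [if_neg (by omega), if_pos h]; omega
    · have hnt : (n : ℤ) = 6 * ((n / 6 : ℕ) : ℤ) + 2 := by omega
      rw [hnt] at h1 h2 h3 hbz2
      have := arith2 ((n / 6 : ℕ) : ℤ) bz c D (by omega) hbz1 hbz2 (by omega) (by omega) h1 h2 h3
      unfold tgt; rw [if_neg (by omega), if_neg (by omega), if_pos h]; omega
    · have hnt : (n : ℤ) = 6 * ((n / 6 : ℕ) : ℤ) + 3 := by omega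
      rw [hnt] at h1 h2 h3 hbz2
      have := arith3 ((n / 6 : ℕ) : ℤ) bz c D (by omega) hbz1 hbz2 (by omega) (by omega) h1 h2 h3
      unfold tgt; rw [if_neg (by omega), if_neg (by omega), if_neg (by omega), if_pos h]; omega
    · have hnt : (n : ℤ) = 6 * ((n / 6 : ℕ) : ℤ) + 4 := by omega
      rw [hnt] at h1 h2 h3 hbz2
      have := arith4 ((n / 6 : ℕ) : ℤ) bz c D (by omega) hbz1 hbz2 (by omega) (by omega) h1 h2 h3
      unfold tgt
      rw [if_neg (by omega), if_neg (by omega), if_neg (by omega), if_neg (by omega), if_pos h]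
      omega
    · have hnt : (n : ℤ) = 6 * ((n / 6 : ℕ) : ℤ) + 5 := by omega
      rw [hnt] at h1 h2 h3 hbz2
      have := arith5 ((n / 6 : ℕ) : ℤ) bz c D (by omega) hbz1 hbz2 (by omega) (by omega) h1 h2 h3
      unfold tgt
      rw [if_neg (by omega), if_neg (by omega), if_neg (by omega), if_neg (by omega),
        if_neg (by omega)]
      omega
  rcases lt_or_gt_of_ne hbne with hlt | hgt
  · exact main (b : ℤ) (by omega) (by omega) i1 i4 (by
      have : ((n : ℤ) - 2 * (b : ℤ)) * c = ((n : ℤ) - (b : ℤ)) * c - (b : ℤ) * c := by ring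
      rw [this]; linarith [i5])
  · refine main ((n : ℤ) - (b : ℤ)) (by omega) (by omega) ?_ ?_ ?_
    · have : (n : ℤ) * ((n : ℤ) - (c : ℤ)) - ((n : ℤ) - (b : ℤ)) * c
          = (n : ℤ) * ((n : ℤ) - (c : ℤ)) - ((n : ℤ) - (b : ℤ)) * c := rfl
      linarith [i3]
    · have e : ((n : ℤ) - ((n : ℤ) - (b : ℤ))) * c = (b : ℤ) * c := by ring
      rw [e]; linarith [i2]
    · have e : ((n : ℤ) - 2 * ((n : ℤ) - (b : ℤ))) * c
          = (b : ℤ) * c - ((n : ℤ) - (b : ℤ)) * c := by ring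
      rw [e]; linarith [i6]

lemma strips_arith (n g1 g2 g3 D : ℕ) (hn : 3 ≤ n) (hp1 : 1 ≤ g1) (hp2 : 1 ≤ g2)
    (hp3 : 1 ≤ g3) (hsum : g1 + g2 + g3 = n)
    (h12 : g1 ≠ g2) (h13 : g1 ≠ g3) (h23 : g2 ≠ g3)
    (d12 : n * g1 - n * g2 ≤ D) (d21 : n * g2 - n * g1 ≤ D)
    (d13 : n * g1 - n * g3 ≤ D) (d31 : n * g3 - n * g1 ≤ D)
    (d23 : n * g2 - n * g3 ≤ D) (d32 : n * g3 - n * g2 ≤ D) : tgt n ≤ D := by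
  have h2n := tgt_le_two_n hn
  have key : 2 * n ≤ D := by
    have hmul : ∀ u v : ℕ, u + 2 ≤ v → n * u + 2 * n ≤ n * v := by
      intro u v huv
      calc n * u + 2 * n = n * (u + 2) := by ring
      _ ≤ n * v := Nat.mul_le_mul_left n huv
    by_cases c12 : g1 ≤ g2 <;> by_cases c13 : g1 ≤ g3 <;> by_cases c23 : g2 ≤ g3
    · have := hmul g1 g3 (by omega); omega
    · have := hmul g1 g2 (by omega); omega
    · omega
    · have := hmul g3 g2 (by omega); omega
    · have := hmul g2 g3 (by omega); omega
    · omega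
    · have := hmul g2 g1 (by omega); omega
    · have := hmul g3 g1 (by omega); omega
  omega

end MondrianAux
namespace MondrianAux

lemma three_mem {s : Finset Rect} (h : s.card = 3) {a b c x : Rect}
    (ha : a ∈ s) (hb : b ∈ s) (hc : c ∈ s)
    (hab : a ≠ b) (hac : a ≠ c) (hbc : b ≠ c) (hx : x ∈ s) :
    x = a ∨ x = b ∨ x = c := by
  have hsub : ({a, b, c} : Finset Rect) ⊆ s := by
    intro y hy
    simp only [Finset.mem_insert, Finset.mem_singleton] at hy
    rcases hy with rfl | rfl | rfl <;> assumption
  have hcard3 : ({a, b, c} : Finset Rect).card = 3 := by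
    rw [Finset.card_insert_of_notMem (by simp [hab, hac]),
      Finset.card_insert_of_notMem (by simp [hbc]), Finset.card_singleton]
  have heq : ({a, b, c} : Finset Rect) = s :=
    Finset.eq_of_subset_of_card_le hsub (by omega)
  rw [← heq] at hx
  simpa using hx

lemma two_exists {n : ℕ} (P : Mondrian n) (hcard : P.rects.card = 3) (a b : Rect) :
    ∃ c ∈ P.rects, c ≠ a ∧ c ≠ b := by
  by_contra hcon
  push_neg at hcon
  have hsub : P.rects ⊆ {a, b} := by
    intro x hx
    simp only [Finset.mem_insert, Finset.mem_singleton]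
    rcases eq_or_ne x a with h | h
    · exact Or.inl h
    · exact Or.inr (hcon x hx h)
  have := Finset.card_le_card hsub
  have : ({a, b} : Finset Rect).card ≤ 2 := Finset.card_insert_le _ _ |>.trans (by simp)
  omega

lemma T_case {n : ℕ} (hn : 3 ≤ n) (P : Mondrian n) (hcard : P.rects.card = 3)
    (r0 : Rect) (hr0 : r0 ∈ P.rects) (hw : r0.w = n) (hy0 : r0.y = 0)
    (hoth : ∀ s ∈ P.rects, s ≠ r0 → s.w < n) : tgt n ≤ P.defect := by
  obtain ⟨hx0n, hy0n⟩ := P.inside r0 hr0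
  obtain ⟨hw0p, hh0p⟩ := P.pos r0 hr0
  have hx0 : r0.x = 0 := by omega
  have han : r0.h < n := by
    by_contra hcon
    push_neg at hcon
    obtain ⟨r1, hr1, hne⟩ := Finset.exists_mem_ne (s := P.rects) (by omega) r0
    obtain ⟨hx1n, hy1n⟩ := P.inside r1 hr1
    obtain ⟨hw1p, hh1p⟩ := P.pos r1 hr1
    have hcov0 : r0.Covers r1.x r1.y := by unfold Rect.Covers; omega
    have hcov1 : r1.Covers r1.x r1.y := by unfold Rect.Covers; omega
    exact hne (cover_unique P hr1 hr0 hcov1 hcov0)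
  obtain ⟨r1, ⟨hr1, hc1⟩, -⟩ := P.cover 0 r0.h (by omega) han
  unfold Rect.Covers at hc1
  have hne10 : r1 ≠ r0 := by
    intro h; rw [h] at hc1; omega
  obtain ⟨hx1n, hy1n⟩ := P.inside r1 hr1
  obtain ⟨hw1p, hh1p⟩ := P.pos r1 hr1
  have hx1 : r1.x = 0 := by omega
  have hy1 : r1.y = r0.h := by
    rcases Nat.lt_or_ge r1.y r0.h with hlt | hge
    · exfalso
      have hcov1 : r1.Covers 0 (r0.h - 1) := by unfold Rect.Covers; omega
      have hcov0 : r0.Covers 0 (r0.h - 1) := by unfold Rect.Covers; omega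
      exact hne10 (cover_unique P hr1 hr0 hcov1 hcov0)
    · omega
  have hbn : r1.w < n := hoth r1 hr1 hne10
  obtain ⟨r2, ⟨hr2, hc2⟩, -⟩ := P.cover r1.w r0.h hbn han
  unfold Rect.Covers at hc2
  have hne20 : r2 ≠ r0 := by
    intro h; rw [h] at hc2; omega
  have hne21 : r2 ≠ r1 := by
    intro h; rw [h] at hc2; omega
  obtain ⟨hx2n, hy2n⟩ := P.inside r2 hr2
  obtain ⟨hw2p, hh2p⟩ := P.pos r2 hr2
  have hx2 : r2.x = r1.w := by
    rcases Nat.lt_or_ge r2.x r1.w with hlt | hge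
    · exfalso
      have hcov2 : r2.Covers (r1.w - 1) r0.h := by unfold Rect.Covers; omega
      have hcov1 : r1.Covers (r1.w - 1) r0.h := by unfold Rect.Covers; omega
      exact hne21 (cover_unique P hr2 hr1 hcov2 hcov1)
    · omega
  have hy2 : r2.y = r0.h := by
    rcases Nat.lt_or_ge r2.y r0.h with hlt | hge
    · exfalso
      have hcov2 : r2.Covers r1.w (r0.h - 1) := by unfold Rect.Covers; omega
      have hcov0 : r0.Covers r1.w (r0.h - 1) := by unfold Rect.Covers; omega
      exact hne20 (cover_unique P hr2 hr0 hcov2 hcov0)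
    · omega
  have hh1 : r1.h = n - r0.h := by
    obtain ⟨u, ⟨hu, hcu⟩, -⟩ := P.cover 0 (n - 1) (by omega) (by omega)
    unfold Rect.Covers at hcu
    have hu0 : u ≠ r0 := by intro h; rw [h] at hcu; omega
    have hu2 : u ≠ r2 := by intro h; rw [h] at hcu; omega
    have hu1 : u = r1 := by
      rcases three_mem hcard hr0 hr1 hr2 (Ne.symm hne10) (Ne.symm hne20) (Ne.symm hne21) hu
        with h | h | h <;> tauto
    rw [hu1] at hcu
    omega
  have hwh2 : r2.w = n - r1.w ∧ r2.h = n - r0.h := by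
    obtain ⟨u, ⟨hu, hcu⟩, -⟩ := P.cover (n - 1) (n - 1) (by omega) (by omega)
    unfold Rect.Covers at hcu
    have hu0 : u ≠ r0 := by intro h; rw [h] at hcu; omega
    have hu1 : u ≠ r1 := by intro h; rw [h] at hcu; omega
    have hu2 : u = r2 := by
      rcases three_mem hcard hr0 hr1 hr2 (Ne.symm hne10) (Ne.symm hne20) (Ne.symm hne21) hu
        with h | h | h <;> tauto
    rw [hu2] at hcu
    constructor <;> omega
  have h2b : 2 * r1.w ≠ n := by
    intro h
    refine P.noncong r1 hr1 r2 hr2 (Ne.symm hne21) (Or.inl ⟨?_, ?_⟩)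
    · omega
    · rw [hh1, hwh2.2]
  have e0 : r0.area = n * r0.h := by unfold Rect.area; rw [hw]
  have e1 : r1.area = r1.w * (n - r0.h) := by unfold Rect.area; rw [hh1]
  have e2 : r2.area = (n - r1.w) * (n - r0.h) := by unfold Rect.area; rw [hwh2.1, hwh2.2]
  refine T_lower n r0.h r1.w P.defect hn (by omega) han (by omega) hbn h2b ?_ ?_ ?_ ?_ ?_ ?_
  · rw [← e0, ← e1]; exact defect_ge P hr0 hr1
  · rw [← e0, ← e1]; exact defect_ge P hr1 hr0
  · rw [← e0, ← e2]; exact defect_ge P hr0 hr2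
  · rw [← e0, ← e2]; exact defect_ge P hr2 hr0
  · rw [← e1, ← e2]; exact defect_ge P hr2 hr1
  · rw [← e1, ← e2]; exact defect_ge P hr1 hr2

lemma strips_case {n : ℕ} (hn : 3 ≤ n) (P : Mondrian n) (hcard : P.rects.card = 3)
    (hall : ∀ r ∈ P.rects, r.w = n) : tgt n ≤ P.defect := by
  obtain ⟨ra, ⟨hra, hca⟩, -⟩ := P.cover 0 0 (by omega) (by omega)
  unfold Rect.Covers at hca
  obtain ⟨hxan, hyan⟩ := P.inside ra hra
  obtain ⟨hwap, hhap⟩ := P.pos ra hra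
  have hwa : ra.w = n := hall ra hra
  have hya : ra.y = 0 := by omega
  have hana : ra.h < n := by
    by_contra hcon
    push_neg at hcon
    obtain ⟨rb, hrb, hne⟩ := Finset.exists_mem_ne (s := P.rects) (by omega) ra
    obtain ⟨hxbn, hybn⟩ := P.inside rb hrb
    obtain ⟨hwbp, hhbp⟩ := P.pos rb hrb
    have hcova : ra.Covers rb.x rb.y := by unfold Rect.Covers; omega
    have hcovb : rb.Covers rb.x rb.y := by unfold Rect.Covers; omega
    exact hne (cover_unique P hrb hra hcovb hcova)
  obtain ⟨rb, ⟨hrb, hcb⟩, -⟩ := P.cover 0 ra.h (by omega) hana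
  unfold Rect.Covers at hcb
  have hnba : rb ≠ ra := by intro h; rw [h] at hcb; omega
  obtain ⟨hxbn, hybn⟩ := P.inside rb hrb
  obtain ⟨hwbp, hhbp⟩ := P.pos rb hrb
  have hwb : rb.w = n := hall rb hrb
  have hxb : rb.x = 0 := by omega
  have hyb : rb.y = ra.h := by
    rcases Nat.lt_or_ge rb.y ra.h with hlt | hge
    · exfalso
      have hcovb : rb.Covers 0 (ra.h - 1) := by unfold Rect.Covers; omega
      have hcova : ra.Covers 0 (ra.h - 1) := by unfold Rect.Covers; omega
      exact hnba (cover_unique P hrb hra hcovb hcova)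
    · omega
  have hab : ra.h + rb.h < n := by
    by_contra hcon
    push_neg at hcon
    obtain ⟨rc, hrc, hnca, hncb⟩ := two_exists P hcard ra rb
    obtain ⟨hxcn, hycn⟩ := P.inside rc hrc
    obtain ⟨hwcp, hhcp⟩ := P.pos rc hrc
    have hcovc : rc.Covers rc.x rc.y := by unfold Rect.Covers; omega
    rcases Nat.lt_or_ge rc.y ra.h with h1 | h1
    · have hcova : ra.Covers rc.x rc.y := by unfold Rect.Covers; omega
      exact hnca (cover_unique P hrc hra hcovc hcova)
    · have hcovb : rb.Covers rc.x rc.y := by unfold Rect.Covers; omega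
      exact hncb (cover_unique P hrc hrb hcovc hcovb)
  obtain ⟨rc, ⟨hrc, hcc⟩, -⟩ := P.cover 0 (ra.h + rb.h) (by omega) hab
  unfold Rect.Covers at hcc
  have hnca : rc ≠ ra := by intro h; rw [h] at hcc; omega
  have hncb : rc ≠ rb := by intro h; rw [h] at hcc; omega
  obtain ⟨hxcn, hycn⟩ := P.inside rc hrc
  obtain ⟨hwcp, hhcp⟩ := P.pos rc hrc
  have hwc : rc.w = n := hall rc hrc
  have hyc : rc.y = ra.h + rb.h := by
    rcases Nat.lt_or_ge rc.y (ra.h + rb.h) with hlt | hge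
    · exfalso
      rcases Nat.lt_or_ge rc.y ra.h with h1 | h1
      · have hcovc : rc.Covers 0 rc.y := by unfold Rect.Covers; omega
        have hcova : ra.Covers 0 rc.y := by unfold Rect.Covers; omega
        exact hnca (cover_unique P hrc hra hcovc hcova)
      · have hcovc : rc.Covers 0 rc.y := by unfold Rect.Covers; omega
        have hcovb : rb.Covers 0 rc.y := by unfold Rect.Covers; omega
        exact hncb (cover_unique P hrc hrb hcovc hcovb)
    · omega
  have hhc : rc.y + rc.h = n := by
    obtain ⟨u, ⟨hu, hcu⟩, -⟩ := P.cover 0 (n - 1) (by omega) (by omega)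
    unfold Rect.Covers at hcu
    have hu1 : u ≠ ra := by intro h; rw [h] at hcu; omega
    have hu2 : u ≠ rb := by intro h; rw [h] at hcu; omega
    have hu3 : u = rc := by
      rcases three_mem hcard hra hrb hrc (Ne.symm hnba) (Ne.symm hnca) (Ne.symm hncb) hu
        with h | h | h <;> tauto
    rw [hu3] at hcu
    omega
  have hd12 : ra.h ≠ rb.h := by
    intro h
    exact P.noncong ra hra rb hrb (Ne.symm hnba) (Or.inl ⟨by rw [hwa, hwb], h⟩)
  have hd13 : ra.h ≠ rc.h := by
    intro h
    exact P.noncong ra hra rc hrc (Ne.symm hnca) (Or.inl ⟨by rw [hwa, hwc], h⟩)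
  have hd23 : rb.h ≠ rc.h := by
    intro h
    exact P.noncong rb hrb rc hrc (Ne.symm hncb) (Or.inl ⟨by rw [hwb, hwc], h⟩)
  have ea : ra.area = n * ra.h := by unfold Rect.area; rw [hwa]
  have eb : rb.area = n * rb.h := by unfold Rect.area; rw [hwb]
  have ec : rc.area = n * rc.h := by unfold Rect.area; rw [hwc]
  refine strips_arith n ra.h rb.h rc.h P.defect hn (by omega) (by omega) (by omega)
    (by omega) hd12 hd13 hd23 ?_ ?_ ?_ ?_ ?_ ?_
  · rw [← ea, ← eb]; exact defect_ge P hra hrb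
  · rw [← ea, ← eb]; exact defect_ge P hrb hra
  · rw [← ea, ← ec]; exact defect_ge P hra hrc
  · rw [← ea, ← ec]; exact defect_ge P hrc hra
  · rw [← eb, ← ec]; exact defect_ge P hrb hrc
  · rw [← eb, ← ec]; exact defect_ge P hrc hrb

end MondrianAux
namespace MondrianAux

lemma main_w {n : ℕ} (hn : 3 ≤ n) (P : Mondrian n) (hcard : P.rects.card = 3)
    (r0 : Rect) (hr0 : r0 ∈ P.rects) (hw : r0.w = n) : tgt n ≤ P.defect := by
  by_cases hex : ∃ s ∈ P.rects, s ≠ r0 ∧ s.w = n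
  · obtain ⟨s, hs, hsne, hsw⟩ := hex
    apply strips_case hn P hcard
    intro u hu
    by_contra huw
    have hun : u.w < n := by
      have := P.inside u hu
      omega
    have hu0 : u ≠ r0 := by intro h; rw [h] at hun; omega
    have hus : u ≠ s := by intro h; rw [h] at hun; omega
    obtain ⟨hxun, hyun⟩ := P.inside u hu
    obtain ⟨hwup, hhup⟩ := P.pos u hu
    obtain ⟨hx0n, hy0n⟩ := P.inside r0 hr0
    obtain ⟨hw0p, hh0p⟩ := P.pos r0 hr0
    obtain ⟨hxsn, hysn⟩ := P.inside s hs
    obtain ⟨hwsp, hhsp⟩ := P.pos s hs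
    -- a column not met by u
    have hyu : u.y < n := by omega
    set i : ℕ := if u.x = 0 then n - 1 else 0 with hi
    have hin : i < n := by rw [hi]; split <;> omega
    have hnotu : ¬ u.Covers i u.y := by
      unfold Rect.Covers
      rw [hi]; split <;> omega
    obtain ⟨v, ⟨hv, hcv⟩, -⟩ := P.cover i u.y hin hyu
    have hvu : v ≠ u := by intro h; rw [h] at hcv; exact hnotu hcv
    have hvw : v.w = n := by
      rcases three_mem hcard hr0 hs hu (Ne.symm hsne) (Ne.symm hu0) (Ne.symm hus) hv
        with h | h | h
      · rw [h, hw]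
      · rw [h, hsw]
      · exact absurd h hvu
    obtain ⟨hxvn, hyvn⟩ := P.inside v hv
    have hcu' : u.Covers u.x u.y := by unfold Rect.Covers; omega
    have hcv' : v.Covers u.x u.y := by
      unfold Rect.Covers at hcv ⊢
      omega
    exact hvu (cover_unique P hv hu hcv' hcu')
  · push_neg at hex
    have hoth : ∀ s ∈ P.rects, s ≠ r0 → s.w < n := by
      intro s hs hne
      have := P.inside s hs
      have := hex s hs hne
      omega
    obtain ⟨hx0n, hy0n⟩ := P.inside r0 hr0
    obtain ⟨hw0p, hh0p⟩ := P.pos r0 hr0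
    have hx0 : r0.x = 0 := by omega
    have hy : r0.y = 0 ∨ r0.y + r0.h = n := by
      by_contra hcon
      push_neg at hcon
      obtain ⟨hy1, hy2⟩ := hcon
      have hy0pos : 1 ≤ r0.y := by omega
      have hy0top : r0.y + r0.h ≤ n - 1 := by omega
      -- s1 covers (0,0), s2 covers (0, n-1)
      obtain ⟨s1, ⟨hs1, hcs1⟩, -⟩ := P.cover 0 0 (by omega) (by omega)
      unfold Rect.Covers at hcs1
      have hs10 : s1 ≠ r0 := by intro h; rw [h] at hcs1; omega
      obtain ⟨s2, ⟨hs2, hcs2⟩, -⟩ := P.cover 0 (n - 1) (by omega) (by omega)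
      unfold Rect.Covers at hcs2
      have hs20 : s2 ≠ r0 := by intro h; rw [h] at hcs2; omega
      obtain ⟨hx1n, hy1n⟩ := P.inside s1 hs1
      obtain ⟨hw1p, hh1p⟩ := P.pos s1 hs1
      obtain ⟨hx2n, hy2n⟩ := P.inside s2 hs2
      obtain ⟨hw2p, hh2p⟩ := P.pos s2 hs2
      have hs12 : s1 ≠ s2 := by
        intro h
        rw [← h] at hcs2
        -- s1 covers (0,0) and (0,n-1), hence covers (0, r0.y), as does r0
        have hcv1 : s1.Covers 0 r0.y := by unfold Rect.Covers; omega
        have hcv0 : r0.Covers 0 r0.y := by unfold Rect.Covers; omega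
        exact hs10 (cover_unique P hs1 hr0 hcv1 hcv0)
      have hs1w : s1.w < n := hoth s1 hs1 hs10
      -- cell (s1.w, 0)
      obtain ⟨v, ⟨hv, hcv⟩, -⟩ := P.cover s1.w 0 hs1w (by omega)
      unfold Rect.Covers at hcv
      have hv0 : v ≠ r0 := by intro h; rw [h] at hcv; omega
      have hv1 : v ≠ s1 := by intro h; rw [h] at hcv; omega
      have hv2 : v = s2 := by
        rcases three_mem hcard hr0 hs1 hs2 (Ne.symm hs10) (Ne.symm hs20) hs12 hv
          with h | h | h <;> tauto
      rw [hv2] at hcv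
      -- s2 covers (0, n-1) and (s1.w, 0): so s2.y = 0 and s2.y + s2.h = n
      have hcv0 : s2.Covers 0 r0.y := by unfold Rect.Covers; omega
      have hcv0' : r0.Covers 0 r0.y := by unfold Rect.Covers; omega
      exact hs20 (cover_unique P hs2 hr0 hcv0 hcv0')
    rcases hy with hy | hy
    · exact T_case hn P hcard r0 hr0 hw hy hoth
    · have hT := T_case hn (Mondrian.vflip P) (by rw [vflip_card]; exact hcard)
        (vf n r0) (Finset.mem_image_of_mem _ hr0) hw (by simp only [vf]; omega) ?_
      · rwa [vflip_defect] at hT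
      · intro s hs hne
        obtain ⟨s₀, hs₀, rfl⟩ := Finset.mem_image.mp hs
        refine hoth s₀ hs₀ ?_
        intro h
        rw [h] at hne
        exact hne rfl

lemma exists_full {n : ℕ} (hn : 3 ≤ n) (P : Mondrian n) (hcard : P.rects.card = 3) :
    ∃ r ∈ P.rects, r.w = n ∨ r.h = n := by
  obtain ⟨ra, ⟨hra, hca⟩, -⟩ := P.cover 0 0 (by omega) (by omega)
  obtain ⟨rb, ⟨hrb, hcb⟩, -⟩ := P.cover (n - 1) 0 (by omega) (by omega)
  obtain ⟨rc, ⟨hrc, hcc⟩, -⟩ := P.cover 0 (n - 1) (by omega) (by omega)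
  obtain ⟨rd, ⟨hrd, hcd⟩, -⟩ := P.cover (n - 1) (n - 1) (by omega) (by omega)
  unfold Rect.Covers at hca hcb hcc hcd
  obtain ⟨hia1, hia2⟩ := P.inside ra hra
  obtain ⟨hib1, hib2⟩ := P.inside rb hrb
  obtain ⟨hic1, hic2⟩ := P.inside rc hrc
  obtain ⟨hid1, hid2⟩ := P.inside rd hrd
  rcases eq_or_ne ra rb with h | hab
  · subst h; exact ⟨ra, hra, Or.inl (by omega)⟩
  rcases eq_or_ne ra rc with h | hac
  · subst h; exact ⟨ra, hra, Or.inr (by omega)⟩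
  rcases eq_or_ne ra rd with h | had
  · subst h; exact ⟨ra, hra, Or.inl (by omega)⟩
  rcases eq_or_ne rb rc with h | hbc
  · subst h; exact ⟨rb, hrb, Or.inl (by omega)⟩
  rcases eq_or_ne rb rd with h | hbd
  · subst h; exact ⟨rb, hrb, Or.inr (by omega)⟩
  rcases eq_or_ne rc rd with h | hcd'
  · subst h; exact ⟨rc, hrc, Or.inl (by omega)⟩
  exfalso
  rcases three_mem hcard hra hrb hrc hab hac hbc hrd with h | h | h
  · exact had h.symm
  · exact hbd h.symm
  · exact hcd' h.symm

lemma lower {n : ℕ} (hn : 3 ≤ n) (P : Mondrian n) (hcard : P.rects.card = 3) :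
    tgt n ≤ P.defect := by
  obtain ⟨r, hr, hwh⟩ := exists_full hn P hcard
  rcases hwh with hwr | hhr
  · exact main_w hn P hcard r hr hwr
  · have := main_w hn (Mondrian.transpose P) (by rw [transpose_card]; exact hcard)
      (tr r) (Finset.mem_image_of_mem _ hr) (by simp [tr, hhr])
    rwa [transpose_defect] at this

end MondrianAux
namespace MondrianAux

def mkT (n a c b d : ℕ) (ha : 0 < a) (hb : 0 < b) (hc : 0 < c) (hd : 0 < d)
    (hac : a + c = n) (hbd : b + d = n) (hne : b ≠ d) : Mondrian n where
  rects := {⟨0, 0, n, a⟩, ⟨0, a, b, c⟩, ⟨b, a, d, c⟩}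
  pos := by
    intro r hr
    simp only [Finset.mem_insert, Finset.mem_singleton] at hr
    rcases hr with rfl | rfl | rfl
    · exact ⟨show 0 < n by omega, ha⟩
    · exact ⟨hb, hc⟩
    · exact ⟨hd, hc⟩
  inside := by
    intro r hr
    simp only [Finset.mem_insert, Finset.mem_singleton] at hr
    rcases hr with rfl | rfl | rfl
    · exact ⟨show 0 + n ≤ n by omega, show 0 + a ≤ n by omega⟩
    · exact ⟨show 0 + b ≤ n by omega, show a + c ≤ n by omega⟩
    · exact ⟨show b + d ≤ n by omega, show a + c ≤ n by omega⟩
  cover := by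
    intro i j hi hj
    by_cases hja : j < a
    · refine ⟨⟨0, 0, n, a⟩, ⟨by simp, show 0 ≤ i ∧ i < 0 + n ∧ 0 ≤ j ∧ j < 0 + a by omega⟩, ?_⟩
      rintro r ⟨hr, hcr⟩
      simp only [Finset.mem_insert, Finset.mem_singleton] at hr
      rcases hr with rfl | rfl | rfl
      · rfl
      · exact absurd hcr (show ¬(0 ≤ i ∧ i < 0 + b ∧ a ≤ j ∧ j < a + c) by omega)
      · exact absurd hcr (show ¬(b ≤ i ∧ i < b + d ∧ a ≤ j ∧ j < a + c) by omega)
    · by_cases hib : i < b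
      · refine ⟨⟨0, a, b, c⟩, ⟨by simp, show 0 ≤ i ∧ i < 0 + b ∧ a ≤ j ∧ j < a + c by omega⟩, ?_⟩
        rintro r ⟨hr, hcr⟩
        simp only [Finset.mem_insert, Finset.mem_singleton] at hr
        rcases hr with rfl | rfl | rfl
        · exact absurd hcr (show ¬(0 ≤ i ∧ i < 0 + n ∧ 0 ≤ j ∧ j < 0 + a) by omega)
        · rfl
        · exact absurd hcr (show ¬(b ≤ i ∧ i < b + d ∧ a ≤ j ∧ j < a + c) by omega)
      · refine ⟨⟨b, a, d, c⟩, ⟨by simp, show b ≤ i ∧ i < b + d ∧ a ≤ j ∧ j < a + c by omega⟩, ?_⟩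
        rintro r ⟨hr, hcr⟩
        simp only [Finset.mem_insert, Finset.mem_singleton] at hr
        rcases hr with rfl | rfl | rfl
        · exact absurd hcr (show ¬(0 ≤ i ∧ i < 0 + n ∧ 0 ≤ j ∧ j < 0 + a) by omega)
        · exact absurd hcr (show ¬(0 ≤ i ∧ i < 0 + b ∧ a ≤ j ∧ j < a + c) by omega)
        · rfl
  noncong := by
    intro r hr s hs hne' hcong
    simp only [Finset.mem_insert, Finset.mem_singleton] at hr hs
    rcases hr with rfl | rfl | rfl <;> rcases hs with rfl | rfl | rfl
    · exact hne' rfl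
    · exact (show ¬((n = b ∧ a = c) ∨ (n = c ∧ a = b)) by omega) hcong
    · exact (show ¬((n = d ∧ a = c) ∨ (n = c ∧ a = d)) by omega) hcong
    · exact (show ¬((b = n ∧ c = a) ∨ (b = a ∧ c = n)) by omega) hcong
    · exact hne' rfl
    · exact (show ¬((b = d ∧ c = c) ∨ (b = c ∧ c = d)) by omega) hcong
    · exact (show ¬((d = n ∧ c = a) ∨ (d = a ∧ c = n)) by omega) hcong
    · exact (show ¬((d = b ∧ c = c) ∨ (d = c ∧ c = b)) by omega) hcong
    · exact hne' rfl

lemma mkT_card (n a c b d : ℕ) (ha : 0 < a) (hb : 0 < b) (hc : 0 < c) (hd : 0 < d)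
    (hac : a + c = n) (hbd : b + d = n) (hne : b ≠ d) :
    (mkT n a c b d ha hb hc hd hac hbd hne).rects.card = 3 := by
  show ({⟨0, 0, n, a⟩, ⟨0, a, b, c⟩, ⟨b, a, d, c⟩} : Finset Rect).card = 3
  rw [Finset.card_insert_of_notMem (by
      simp only [Finset.mem_insert, Finset.mem_singleton, Rect.mk.injEq]; omega),
    Finset.card_insert_of_notMem (by
      simp only [Finset.mem_singleton, Rect.mk.injEq]; omega),
    Finset.card_singleton]

lemma mkT_defect (n a c b d V : ℕ) (ha : 0 < a) (hb : 0 < b) (hc : 0 < c) (hd : 0 < d)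
    (hac : a + c = n) (hbd : b + d = n) (hne : b ≠ d)
    (hup : ∀ u v : ℕ, (u = n * a ∨ u = b * c ∨ u = d * c) →
      (v = n * a ∨ v = b * c ∨ v = d * c) → u - v ≤ V)
    (hlo : ∃ u v : ℕ, (u = n * a ∨ u = b * c ∨ u = d * c) ∧
      (v = n * a ∨ v = b * c ∨ v = d * c) ∧ u - v = V) :
    (mkT n a c b d ha hb hc hd hac hbd hne).defect = V := by
  set P := mkT n a c b d ha hb hc hd hac hbd hne with hP
  have hrects : P.rects = {⟨0, 0, n, a⟩, ⟨0, a, b, c⟩, ⟨b, a, d, c⟩} := rfl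
  apply le_antisymm
  · unfold Mondrian.defect
    rw [hrects]
    refine Finset.sup_le ?_
    intro r hr
    refine Finset.sup_le ?_
    intro q hq
    simp only [Finset.mem_insert, Finset.mem_singleton] at hr hq
    have har : r.area = n * a ∨ r.area = b * c ∨ r.area = d * c := by
      rcases hr with rfl | rfl | rfl
      · left; rfl
      · right; left; rfl
      · right; right; rfl
    have haq : q.area = n * a ∨ q.area = b * c ∨ q.area = d * c := by
      rcases hq with rfl | rfl | rfl
      · left; rfl
      · right; left; rfl
      · right; right; rfl
    exact hup r.area q.area har haq
  · obtain ⟨u, v, hu, hv, huv⟩ := hlo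
    rw [← huv]
    have hmem : ∀ w : ℕ, (w = n * a ∨ w = b * c ∨ w = d * c) →
        ∃ r ∈ P.rects, r.area = w := by
      intro w hw
      rcases hw with rfl | rfl | rfl
      · exact ⟨⟨0, 0, n, a⟩, by rw [hrects]; simp, rfl⟩
      · exact ⟨⟨0, a, b, c⟩, by rw [hrects]; simp, rfl⟩
      · exact ⟨⟨b, a, d, c⟩, by rw [hrects]; simp, rfl⟩
    obtain ⟨r, hrm, hra⟩ := hmem u hu
    obtain ⟨q, hqm, hqa⟩ := hmem v hv
    rw [← hra, ← hqa]
    exact defect_ge P hrm hqm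

lemma upper (n : ℕ) (hn : 3 ≤ n) :
    ∃ P : Mondrian n, P.rects.card = 3 ∧ P.defect = tgt n := by
  have h6 : n % 6 = 0 ∨ n % 6 = 1 ∨ n % 6 = 2 ∨ n % 6 = 3 ∨ n % 6 = 4 ∨ n % 6 = 5 := by
    omega
  rcases h6 with h | h | h | h | h | h
  · -- n = 6t+6
    obtain ⟨t, rfl⟩ : ∃ t, n = 6 * t + 6 := ⟨n / 6 - 1, by omega⟩
    obtain ⟨s, hs⟩ : ∃ s, t * t = s := ⟨_, rfl⟩
    refine ⟨mkT (6*t+6) (2*t+2) (4*t+4) (3*t+2) (3*t+4) (by omega) (by omega) (by omega)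
      (by omega) (by omega) (by omega) (by omega), mkT_card _ _ _ _ _ _ _ _ _ _ _ _, ?_⟩
    have eA : (6*t+6) * (2*t+2) = 12*s + 24*t + 12 := by rw [← hs]; ring
    have eB : (3*t+2) * (4*t+4) = 12*s + 20*t + 8 := by rw [← hs]; ring
    have eC : (3*t+4) * (4*t+4) = 12*s + 28*t + 16 := by rw [← hs]; ring
    have htg : tgt (6*t+6) = 8*t + 8 := by unfold tgt; split_ifs <;> omega
    rw [htg]
    apply mkT_defect
    · intro u v hu hv
      rw [eA, eB, eC] at hu hv
      omega
    · exact ⟨(3*t+4) * (4*t+4), (3*t+2) * (4*t+4), by tauto, by tauto, by rw [eB, eC]; omega⟩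
  · -- n = 6t+7
    obtain ⟨t, rfl⟩ : ∃ t, n = 6 * t + 7 := ⟨n / 6 - 1, by omega⟩
    obtain ⟨s, hs⟩ : ∃ s, t * t = s := ⟨_, rfl⟩
    refine ⟨mkT (6*t+7) (2*t+2) (4*t+5) (3*t+3) (3*t+4) (by omega) (by omega) (by omega)
      (by omega) (by omega) (by omega) (by omega), mkT_card _ _ _ _ _ _ _ _ _ _ _ _, ?_⟩
    have eA : (6*t+7) * (2*t+2) = 12*s + 26*t + 14 := by rw [← hs]; ring
    have eB : (3*t+3) * (4*t+5) = 12*s + 27*t + 15 := by rw [← hs]; ring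
    have eC : (3*t+4) * (4*t+5) = 12*s + 31*t + 20 := by rw [← hs]; ring
    have htg : tgt (6*t+7) = 5*t + 6 := by unfold tgt; split_ifs <;> omega
    rw [htg]
    apply mkT_defect
    · intro u v hu hv
      rw [eA, eB, eC] at hu hv
      omega
    · exact ⟨(3*t+4) * (4*t+5), (6*t+7) * (2*t+2), by tauto, by tauto, by rw [eA, eC]; omega⟩
  · -- n = 6t+8
    obtain ⟨t, rfl⟩ : ∃ t, n = 6 * t + 8 := ⟨n / 6 - 1, by omega⟩
    obtain ⟨s, hs⟩ : ∃ s, t * t = s := ⟨_, rfl⟩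
    refine ⟨mkT (6*t+8) (2*t+3) (4*t+5) (3*t+3) (3*t+5) (by omega) (by omega) (by omega)
      (by omega) (by omega) (by omega) (by omega), mkT_card _ _ _ _ _ _ _ _ _ _ _ _, ?_⟩
    have eA : (6*t+8) * (2*t+3) = 12*s + 34*t + 24 := by rw [← hs]; ring
    have eB : (3*t+3) * (4*t+5) = 12*s + 27*t + 15 := by rw [← hs]; ring
    have eC : (3*t+5) * (4*t+5) = 12*s + 35*t + 25 := by rw [← hs]; ring
    have htg : tgt (6*t+8) = 8*t + 10 := by unfold tgt; split_ifs <;> omega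
    rw [htg]
    apply mkT_defect
    · intro u v hu hv
      rw [eA, eB, eC] at hu hv
      omega
    · exact ⟨(3*t+5) * (4*t+5), (3*t+3) * (4*t+5), by tauto, by tauto, by rw [eB, eC]; omega⟩
  · -- n = 6t+3
    obtain ⟨t, rfl⟩ : ∃ t, n = 6 * t + 3 := ⟨n / 6, by omega⟩
    obtain ⟨s, hs⟩ : ∃ s, t * t = s := ⟨_, rfl⟩
    refine ⟨mkT (6*t+3) (2*t+1) (4*t+2) (3*t+1) (3*t+2) (by omega) (by omega) (by omega)
      (by omega) (by omega) (by omega) (by omega), mkT_card _ _ _ _ _ _ _ _ _ _ _ _, ?_⟩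
    have eA : (6*t+3) * (2*t+1) = 12*s + 12*t + 3 := by rw [← hs]; ring
    have eB : (3*t+1) * (4*t+2) = 12*s + 10*t + 2 := by rw [← hs]; ring
    have eC : (3*t+2) * (4*t+2) = 12*s + 14*t + 4 := by rw [← hs]; ring
    have htg : tgt (6*t+3) = 4*t + 2 := by unfold tgt; split_ifs <;> omega
    rw [htg]
    apply mkT_defect
    · intro u v hu hv
      rw [eA, eB, eC] at hu hv
      omega
    · exact ⟨(3*t+2) * (4*t+2), (3*t+1) * (4*t+2), by tauto, by tauto, by rw [eB, eC]; omega⟩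
  · -- n = 6t+4
    obtain ⟨t, rfl⟩ : ∃ t, n = 6 * t + 4 := ⟨n / 6, by omega⟩
    obtain ⟨s, hs⟩ : ∃ s, t * t = s := ⟨_, rfl⟩
    refine ⟨mkT (6*t+4) (2*t+1) (4*t+3) (3*t+1) (3*t+3) (by omega) (by omega) (by omega)
      (by omega) (by omega) (by omega) (by omega), mkT_card _ _ _ _ _ _ _ _ _ _ _ _, ?_⟩
    have eA : (6*t+4) * (2*t+1) = 12*s + 14*t + 4 := by rw [← hs]; ring
    have eB : (3*t+1) * (4*t+3) = 12*s + 13*t + 3 := by rw [← hs]; ring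
    have eC : (3*t+3) * (4*t+3) = 12*s + 21*t + 9 := by rw [← hs]; ring
    have htg : tgt (6*t+4) = 8*t + 6 := by unfold tgt; split_ifs <;> omega
    rw [htg]
    apply mkT_defect
    · intro u v hu hv
      rw [eA, eB, eC] at hu hv
      omega
    · exact ⟨(3*t+3) * (4*t+3), (3*t+1) * (4*t+3), by tauto, by tauto, by rw [eB, eC]; omega⟩
  · -- n = 6t+5
    obtain ⟨t, rfl⟩ : ∃ t, n = 6 * t + 5 := ⟨n / 6, by omega⟩
    obtain ⟨s, hs⟩ : ∃ s, t * t = s := ⟨_, rfl⟩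
    refine ⟨mkT (6*t+5) (2*t+2) (4*t+3) (3*t+2) (3*t+3) (by omega) (by omega) (by omega)
      (by omega) (by omega) (by omega) (by omega), mkT_card _ _ _ _ _ _ _ _ _ _ _ _, ?_⟩
    have eA : (6*t+5) * (2*t+2) = 12*s + 22*t + 10 := by rw [← hs]; ring
    have eB : (3*t+2) * (4*t+3) = 12*s + 17*t + 6 := by rw [← hs]; ring
    have eC : (3*t+3) * (4*t+3) = 12*s + 21*t + 9 := by rw [← hs]; ring
    have htg : tgt (6*t+5) = 5*t + 4 := by unfold tgt; split_ifs <;> omega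
    rw [htg]
    apply mkT_defect
    · intro u v hu hv
      rw [eA, eB, eC] at hu hv
      omega
    · exact ⟨(6*t+5) * (2*t+2), (3*t+2) * (4*t+3), by tauto, by tauto, by rw [eA, eB]; omega⟩

lemma dk_tgt {n : ℕ} (hn : 3 ≤ n) : mondrianDk n 3 = tgt n := by
  obtain ⟨P, hc, hd⟩ := upper n hn
  apply le_antisymm
  · exact Nat.sInf_le ⟨P, hc, hd⟩
  · refine le_csInf ⟨tgt n, P, hc, hd⟩ ?_
    rintro d ⟨Q, hQc, rfl⟩
    exact lower hn Q hQc

end MondrianAux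

/-- The value of the minimum defect `d_3(n)` over Mondrian partitions of the
`n × n` square into exactly three rectangles, according to `n` modulo `6`. -/
theorem d3_formula (n : ℕ) (hn : 3 ≤ n) :
    (n % 6 = 0 → mondrianDk n 3 = n + n / 3) ∧
    (n % 6 = 1 → mondrianDk n 3 = n - (n - 1) / 6) ∧
    (n % 6 = 2 → mondrianDk n 3 = n + (n - 2) / 3) ∧
    (n % 6 = 3 → mondrianDk n 3 = n - n / 3) ∧
    (n % 6 = 4 → mondrianDk n 3 = n + (n + 2) / 3) ∧
    (n % 6 = 5 → mondrianDk n 3 = n - (n + 1) / 6) := by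
  refine ⟨?_, ?_, ?_, ?_, ?_, ?_⟩ <;> intro h <;> rw [MondrianAux.dk_tgt hn] <;>
    unfold MondrianAux.tgt <;> split_ifs <;> omega
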